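/- Let k be a field of characteristic p > 0 and let d, q be integers with q = p^e for some e ≥ 1 and q/2 < d ≤ q. Then [x_1^{q-d},...,x_{n-1}^{q-d}, −(x_1+...+x_{n-1})^{q-d}]^t is a nonzero homogeneous syzygy of degree q on x_1^d,...,x_{n-1}^d,(x_1+...+x_{n-1})^d in k[x_1,...,x_{n-1}], and it is not a k[x_1,...,x_{n-1}]-combination of Koszul relations (since q − d < d). -/

import Mathlib

open MvPolynomial

noncomputable section

/-- The row of forms `[x₁^d, …, x_{n-1}^d, (x₁+⋯+x_{n-1})^d]` in `k[x₁,…,x_{n-1}]`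
(here with `m = n−1` variables and `m+1` forms). -/
def powForms (k : Type*) [Field k] (m d : ℕ) : Fin (m + 1) → MvPolynomial (Fin m) k :=
  Fin.snoc (fun j : Fin m => (X j : MvPolynomial (Fin m) k) ^ d)
    ((∑ j : Fin m, (X j : MvPolynomial (Fin m) k)) ^ d)

/-- The submodule generated by the Koszul relations on the forms. -/
def powKos (k : Type*) [Field k] (m d : ℕ) :
    Submodule (MvPolynomial (Fin m) k) (Fin (m + 1) → MvPolynomial (Fin m) k) :=
  Submodule.span (MvPolynomial (Fin m) k)
    {w | ∃ i j : Fin (m + 1),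
      w = Pi.single i (powForms k m d j) - Pi.single j (powForms k m d i)}

lemma powForms_isHomogeneous (k : Type*) [Field k] (m d : ℕ) (i : Fin (m + 1)) :
    (powForms k m d i).IsHomogeneous d := by
  unfold powForms
  induction i using Fin.lastCases with
  | last =>
    rw [Fin.snoc_last]
    have h1 : (∑ j : Fin m, (X j : MvPolynomial (Fin m) k)).IsHomogeneous 1 :=
      IsHomogeneous.sum _ _ _ fun j _ => isHomogeneous_X k j
    simpa using h1.pow d
  | cast j =>
    rw [Fin.snoc_castSucc]
    simpa using (isHomogeneous_X k j).pow d


/-- Lemma 6.2(3) (construction): let `char k = p > 0`, `q = pᵉ` with `e ≥ 1` and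
`q/2 < d ≤ q`.  Then `[x₁^{q−d},…,x_{n-1}^{q−d}, −(x₁+⋯+x_{n-1})^{q−d}]ᵗ` is a nonzero
homogeneous syzygy of degree `q` (entries of degree `q − d`) on
`x₁^d,…,x_{n-1}^d,(x₁+⋯+x_{n-1})^d`, and it is not a combination of Koszul relations. -/
theorem stmt16 {k : Type*} [Field k] (p : ℕ) [CharP k p] (hp : 0 < p)
    (e q d m : ℕ) (he : 1 ≤ e) (hq : q = p ^ e) (hm : 1 ≤ m)
    (hd1 : q < 2 * d) (hd2 : d ≤ q)
    (v : Fin (m + 1) → MvPolynomial (Fin m) k)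
    (hv : v = Fin.snoc (fun j : Fin m => (X j : MvPolynomial (Fin m) k) ^ (q - d))
      (-((∑ j : Fin m, (X j : MvPolynomial (Fin m) k)) ^ (q - d)))) :
    (∑ i : Fin (m + 1), v i * powForms k m d i) = 0 ∧
      v ≠ 0 ∧
      (∀ i, v i ∈ homogeneousSubmodule (Fin m) k (q - d)) ∧
      v ∉ powKos k m d := by
  have hd0 : 0 < d := by omega
  have hqd : q - d < d := by omega
  have hqdd : q - d + d = q := by omega
  haveI : NeZero p := ⟨hp.ne'⟩
  haveI : Fact p.Prime := CharP.char_is_prime_of_pos k p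
  haveI : ExpChar (MvPolynomial (Fin m) k) p := .prime Fact.out
  refine ⟨?_, ?_, ?_, ?_⟩
  · -- syzygy
    rw [hv, Fin.sum_univ_castSucc]
    simp only [Fin.snoc_castSucc, Fin.snoc_last, powForms, neg_mul, ← pow_add, hqdd]
    rw [hq, sum_pow_char_pow]
    ring
  · -- nonzero
    intro h
    have h0 : v (Fin.castSucc ⟨0, hm⟩) = 0 := by rw [h]; rfl
    rw [hv, Fin.snoc_castSucc] at h0
    exact pow_ne_zero _ (X_ne_zero _) h0
  · -- homogeneous
    intro i
    rw [mem_homogeneousSubmodule, hv]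
    induction i using Fin.lastCases with
    | last =>
      rw [Fin.snoc_last]
      have h1 : (∑ j : Fin m, (X j : MvPolynomial (Fin m) k)).IsHomogeneous 1 :=
        IsHomogeneous.sum _ _ _ fun j _ => isHomogeneous_X k j
      simpa using (h1.pow (q - d)).neg
    | cast j =>
      rw [Fin.snoc_castSucc]
      simpa using (isHomogeneous_X k j).pow (q - d)
  · -- not Koszul
    intro hmem
    -- every element w of powKos satisfies: ∀ i s, s.degree < d → coeff s (w i) = 0
    have key : ∀ w ∈ powKos k m d, ∀ i : Fin (m + 1), ∀ s : Fin m →₀ ℕ,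
        s.degree < d → MvPolynomial.coeff s (w i) = 0 := by
      intro w hw
      refine Submodule.span_induction ?_ ?_ ?_ ?_ hw
      · rintro w ⟨i, j, rfl⟩ l s hs
        have hz : ∀ a b : Fin (m + 1), MvPolynomial.coeff s ((Pi.single a (powForms k m d b) : Fin (m + 1) → MvPolynomial (Fin m) k) l) = 0 := by
          intro a b
          rcases eq_or_ne l a with rfl | hne
          · rw [Pi.single_eq_same]
            exact (powForms_isHomogeneous k m d b).coeff_eq_zero (by omega)
          · rw [Pi.single_eq_of_ne hne]; simp
        simp [hz]
      · intro l s hs; simp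
      · intro a b _ _ ha hb l s hs
        simp [Pi.add_apply, MvPolynomial.coeff_add, ha l s hs, hb l s hs]
      · intro r a _ ha l s hs
        rw [Pi.smul_apply, smul_eq_mul, MvPolynomial.coeff_mul]
        refine Finset.sum_eq_zero fun x hx => ?_
        rw [Finset.HasAntidiagonal.mem_antidiagonal] at hx
        have : x.2.degree ≤ s.degree := by
          rw [← hx, Finsupp.degree_eq_weight_one, map_add]
          exact Nat.le_add_left _ _
          
        rw [ha l x.2 (lt_of_le_of_lt this hs), mul_zero]
    have hdeg : (Finsupp.single (⟨0, hm⟩ : Fin m) (q - d)).degree = q - d := by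
      classical
      rcases eq_or_ne (q - d) 0 with h0 | h0
      · simp [h0, map_zero]
      · rw [Finsupp.degree_apply, Finsupp.support_single_ne_zero _ h0, Finset.sum_singleton,
          Finsupp.single_eq_same]
    have := key v hmem (Fin.castSucc ⟨0, hm⟩) (Finsupp.single ⟨0, hm⟩ (q - d))
      (by rw [hdeg]; omega)
    rw [hv, Fin.snoc_castSucc] at this
    simp [MvPolynomial.coeff_X_pow] at this


end
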